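/- arXiv:1906.01585 — 2 statements merged into one kernel-verified Lean document; each statement's English description precedes it below -/
import Mathlib

section
/- Let L = {[p₁,q₁],…,[p_t,q_t]} be a set of closed real intervals with 1 < p_i < q_i for all i ∈ [t], let P_L = ConvexHull(⋃_{i∈[t]} {p_i e_i, q_i e_i}) ⊆ ℝᵗ and φ(L) = max_{i∈[t]} ⌈p_i/(q_i−p_i)⌉. Then for every integer k ≥ φ(L), ConvexHull(kP_L ∪ (k+1)P_L) = kP_L ∪ (k+1)P_L; i.e., the union of two consecutive dilations kP_L ∪ (k+1)P_L is convex. -/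
open Pointwise

def PL {t : ℕ} (p q : Fin t → ℝ) : Set (Fin t → ℝ) :=
  convexHull ℝ (⋃ i, {Pi.single i (p i), Pi.single i (q i)})

namespace Stmt16Aux

variable {t : ℕ}

lemma sum_single_div (i : Fin t) (c : ℝ) (r : Fin t → ℝ) :
    ∑ j, (Pi.single i c : Fin t → ℝ) j / r j = c / r i := by
  rw [Finset.sum_eq_single i]
  · rw [Pi.single_eq_same]
  · intro j _ hj
    rw [Pi.single_eq_of_ne hj, zero_div]
  · intro h; exact absurd (Finset.mem_univ i) h

lemma convexC (p q : Fin t → ℝ) (a b : ℝ) :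
    Convex ℝ {x : Fin t → ℝ | (∀ i, 0 ≤ x i) ∧ (∑ i, x i / q i) ≤ a ∧ b ≤ ∑ i, x i / p i} := by
  rintro x ⟨hx0, hx1, hx2⟩ y ⟨hy0, hy1, hy2⟩ s u hs hu hsu
  have hsum : ∀ r : Fin t → ℝ, ∑ i, (s • x + u • y) i / r i
      = s * (∑ i, x i / r i) + u * (∑ i, y i / r i) := by
    intro r
    rw [Finset.mul_sum, Finset.mul_sum, ← Finset.sum_add_distrib]
    refine Finset.sum_congr rfl fun i _ => ?_
    simp only [Pi.add_apply, Pi.smul_apply, smul_eq_mul]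
    ring
  refine ⟨fun i => ?_, ?_, ?_⟩
  · simpa using add_nonneg (mul_nonneg hs (hx0 i)) (mul_nonneg hu (hy0 i))
  · rw [hsum]
    have haa : s * a + u * a = a := by rw [← add_mul, hsu, one_mul]
    linarith [mul_le_mul_of_nonneg_left hx1 hs, mul_le_mul_of_nonneg_left hy1 hu]
  · rw [hsum]
    have hbb : s * b + u * b = b := by rw [← add_mul, hsu, one_mul]
    linarith [mul_le_mul_of_nonneg_left hx2 hs, mul_le_mul_of_nonneg_left hy2 hu]

lemma memPL_iff (p q : Fin t → ℝ) (hp : ∀ i, 0 < p i) (hpq : ∀ i, p i ≤ q i)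
    (x : Fin t → ℝ) :
    x ∈ PL p q ↔ (∀ i, 0 ≤ x i) ∧ (∑ i, x i / q i) ≤ 1 ∧ 1 ≤ ∑ i, x i / p i := by
  have hq : ∀ i, 0 < q i := fun i => lt_of_lt_of_le (hp i) (hpq i)
  constructor
  · intro hx
    have hsub : (⋃ i, {Pi.single i (p i), Pi.single i (q i)} : Set (Fin t → ℝ)) ⊆
        {x : Fin t → ℝ | (∀ i, 0 ≤ x i) ∧ (∑ i, x i / q i) ≤ 1 ∧ 1 ≤ ∑ i, x i / p i} := by
      rintro y hy
      simp only [Set.mem_iUnion, Set.mem_insert_iff, Set.mem_singleton_iff] at hy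
      have hsingle : ∀ (i : Fin t) (c : ℝ), 0 ≤ c → ∀ j, (0:ℝ) ≤ (Pi.single i c : Fin t → ℝ) j := by
        intro i c hc j
        rcases eq_or_ne j i with rfl | hne
        · simpa using hc
        · simp [Pi.single_eq_of_ne hne]
      obtain ⟨i, hy | hy⟩ := hy <;> subst hy
      · exact ⟨hsingle i _ (hp i).le, by
          rw [sum_single_div]; exact div_le_one_of_le₀ (hpq i) (hq i).le, by
          rw [sum_single_div, div_self (hp i).ne']⟩
      · exact ⟨hsingle i _ (hq i).le, by
          rw [sum_single_div, div_self (hq i).ne'], by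
          rw [sum_single_div]; exact (one_le_div (hp i)).2 (hpq i)⟩
    exact convexHull_min hsub (convexC p q 1 1) hx
  · rintro ⟨hx0, hA, hB⟩
    classical
    set A := ∑ i, x i / q i with hAdef
    set B := ∑ i, x i / p i with hBdef
    have hAB : A ≤ B := by
      refine Finset.sum_le_sum fun i _ => ?_
      gcongr
      exacts [hx0 i, hp i, hpq i]
    set θ : ℝ := (1 - A) / (B - A) with hθdef
    have keyθ : (1 - θ) * A + θ * B = 1 ∧ 0 ≤ θ ∧ θ ≤ 1 := by
      rcases eq_or_lt_of_le hAB with hBA | hBA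
      · have hA1 : A = 1 := le_antisymm hA (hBA ▸ hB)
        have : θ = 0 := by rw [hθdef, ← hBA, sub_self, div_zero]
        rw [this, hA1]
        norm_num
      · have hpos : 0 < B - A := sub_pos.2 hBA
        refine ⟨?_, div_nonneg (by linarith) hpos.le, (div_le_one hpos).2 (by linarith)⟩
        have : θ * (B - A) = 1 - A := div_mul_cancel₀ _ hpos.ne'
        nlinarith [this]
    obtain ⟨hkey, hθ0, hθ1⟩ := keyθ
    set w : Fin t × Bool → ℝ := fun ib =>
      if ib.2 then θ * (x ib.1 / p ib.1) else (1 - θ) * (x ib.1 / q ib.1) with hw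
    set z : Fin t × Bool → (Fin t → ℝ) := fun ib =>
      if ib.2 then Pi.single ib.1 (p ib.1) else Pi.single ib.1 (q ib.1) with hz
    have hw0 : ∀ ib ∈ (Finset.univ : Finset (Fin t × Bool)), 0 ≤ w ib := by
      rintro ⟨i, b⟩ _
      cases b
      · simp only [hw, if_neg Bool.false_ne_true]
        exact mul_nonneg (by linarith) (div_nonneg (hx0 i) (hq i).le)
      · simp only [hw, if_pos rfl]
        exact mul_nonneg hθ0 (div_nonneg (hx0 i) (hp i).le)
    have hwsum : ∑ ib, w ib = 1 := by
      rw [Fintype.sum_prod_type]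
      have : ∀ i : Fin t, ∑ b, w (i, b) = θ * (x i / p i) + (1 - θ) * (x i / q i) := by
        intro i
        rw [Fintype.sum_bool]
        simp [hw]
      simp only [this]
      rw [Finset.sum_add_distrib, ← Finset.mul_sum, ← Finset.mul_sum, ← hBdef, ← hAdef]
      linarith
    have hzmem : ∀ ib ∈ (Finset.univ : Finset (Fin t × Bool)),
        z ib ∈ (⋃ i, {Pi.single i (p i), Pi.single i (q i)} : Set (Fin t → ℝ)) := by
      rintro ⟨i, b⟩ _
      refine Set.mem_iUnion.2 ⟨i, ?_⟩
      cases b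
      · simp [hz]
      · simp [hz]
    have hmem := Finset.centerMass_mem_convexHull Finset.univ hw0
      (by rw [hwsum]; norm_num) hzmem
    have heq : Finset.univ.centerMass w z = x := by
      rw [Finset.centerMass_eq_of_sum_1 _ _ hwsum]
      funext j
      rw [Finset.sum_apply]
      have hterm : ∀ ib : Fin t × Bool, (w ib • z ib) j =
          (if ib.2 then θ * (x ib.1 / p ib.1) * (Pi.single ib.1 (p ib.1) : Fin t → ℝ) j
           else (1 - θ) * (x ib.1 / q ib.1) * (Pi.single ib.1 (q ib.1) : Fin t → ℝ) j) := by
        rintro ⟨i, b⟩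
        cases b <;> simp [hw, hz]
      simp only [hterm]
      rw [Fintype.sum_prod_type]
      have hbool : ∀ (P Q : ℝ), (∑ b : Bool, if b = true then P else Q) = P + Q := by
        intro P Q
        rw [Fintype.sum_bool]
        simp
      simp only [hbool]
      rw [Finset.sum_eq_single j]
      · rw [Pi.single_eq_same, Pi.single_eq_same, mul_assoc, mul_assoc,
          div_mul_cancel₀ _ (hp j).ne', div_mul_cancel₀ _ (hq j).ne']
        ring
      · intro i _ hij
        rw [Pi.single_eq_of_ne (Ne.symm hij), Pi.single_eq_of_ne (Ne.symm hij)]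
        ring
      · intro hj; exact absurd (Finset.mem_univ j) hj
    rwa [heq] at hmem

end Stmt16Aux

/-- For intervals with `1 < pᵢ < qᵢ` and every integer
`k ≥ φ(L) = maxᵢ ⌈pᵢ/(qᵢ−pᵢ)⌉`, the union `kP_L ∪ (k+1)P_L` of two consecutive dilations
is convex: `ConvexHull(kP_L ∪ (k+1)P_L) = kP_L ∪ (k+1)P_L`. -/
theorem stmt16 (t : ℕ) (p q : Fin t → ℝ) (h : ∀ i, 1 < p i ∧ p i < q i)
    (k : ℕ) (hk : ∀ i, ⌈p i / (q i - p i)⌉ ≤ (k : ℤ)) :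
    convexHull ℝ ((k : ℝ) • PL p q ∪ ((k : ℝ) + 1) • PL p q) =
      (k : ℝ) • PL p q ∪ ((k : ℝ) + 1) • PL p q := by
  rcases Nat.eq_zero_or_pos t with rfl | ht
  · have hPL : PL p q = ∅ := by
      unfold PL
      rw [show (⋃ i : Fin 0, ({Pi.single i (p i), Pi.single i (q i)} : Set (Fin 0 → ℝ))) = ∅
        from by simp, convexHull_empty]
    simp [hPL]
  · have hp : ∀ i, 0 < p i := fun i => lt_trans one_pos (h i).1
    have hq : ∀ i, 0 < q i := fun i => lt_trans (hp i) (h i).2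
    have hple : ∀ i, p i ≤ q i := fun i => (h i).2.le
    obtain ⟨i0⟩ : Nonempty (Fin t) := ⟨⟨0, ht⟩⟩
    have hceil : (0 : ℤ) < ⌈p i0 / (q i0 - p i0)⌉ :=
      Int.ceil_pos.2 (div_pos (hp i0) (sub_pos.2 (h i0).2))
    have hk1 : (1 : ℤ) ≤ (k : ℤ) := by
      have := hk i0
      omega
    have hkpos : (0 : ℝ) < (k : ℝ) := by
      have : (1 : ℝ) ≤ (k : ℝ) := by exact_mod_cast hk1
      linarith
    have hstep : ∀ i, ((k : ℝ) + 1) * p i ≤ (k : ℝ) * q i := by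
      intro i
      have h1 : p i / (q i - p i) ≤ ((k : ℤ) : ℝ) := Int.ceil_le.1 (hk i)
      rw [div_le_iff₀ (sub_pos.2 (h i).2)] at h1
      push_cast at h1
      nlinarith
    have memSmul : ∀ c : ℝ, 0 < c → ∀ x : Fin t → ℝ, (x ∈ c • PL p q ↔
        (∀ i, 0 ≤ x i) ∧ (∑ i, x i / q i) ≤ c ∧ c ≤ ∑ i, x i / p i) := by
      intro c hc x
      rw [Set.mem_smul_set_iff_inv_smul_mem₀ hc.ne', Stmt16Aux.memPL_iff p q hp hple]
      have e : ∀ r : Fin t → ℝ, (∑ i, (c⁻¹ • x) i / r i) = (∑ i, x i / r i) / c := by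
        intro r
        rw [Finset.sum_div]
        refine Finset.sum_congr rfl fun i _ => ?_
        simp only [Pi.smul_apply, smul_eq_mul]
        ring
      rw [e, e]
      constructor
      · rintro ⟨h1, h2, h3⟩
        refine ⟨fun i => ?_, (div_le_one hc).1 h2, ?_⟩
        · have hx := h1 i
          simp only [Pi.smul_apply, smul_eq_mul] at hx
          nlinarith [inv_pos.2 hc]
        · have := (le_div_iff₀ hc).1 h3
          linarith
      · rintro ⟨h1, h2, h3⟩
        refine ⟨fun i => ?_, (div_le_one hc).2 h2, ?_⟩
        · simp only [Pi.smul_apply, smul_eq_mul]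
          exact mul_nonneg (inv_nonneg.2 hc.le) (h1 i)
        · rw [le_div_iff₀ hc]
          linarith
    have hU : (k : ℝ) • PL p q ∪ ((k : ℝ) + 1) • PL p q
        = {x : Fin t → ℝ | (∀ i, 0 ≤ x i) ∧ (∑ i, x i / q i) ≤ (k : ℝ) + 1 ∧
            (k : ℝ) ≤ ∑ i, x i / p i} := by
      ext x
      rw [Set.mem_union, memSmul (k : ℝ) hkpos x, memSmul ((k : ℝ) + 1) (by linarith) x]
      constructor
      · rintro (⟨h1, h2, h3⟩ | ⟨h1, h2, h3⟩) <;> exact ⟨h1, by linarith, by linarith⟩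
      · rintro ⟨h1, h2, h3⟩
        by_cases hc : (∑ i, x i / q i) ≤ (k : ℝ)
        · exact Or.inl ⟨h1, hc, h3⟩
        · push_neg at hc
          refine Or.inr ⟨h1, h2, ?_⟩
          have hsum : ((k : ℝ) + 1) * ∑ i, x i / q i ≤ (k : ℝ) * ∑ i, x i / p i := by
            rw [Finset.mul_sum, Finset.mul_sum]
            refine Finset.sum_le_sum fun i _ => ?_
            rw [mul_div_assoc', mul_div_assoc', div_le_div_iff₀ (hq i) (hp i)]
            nlinarith [h1 i, hstep i]
          nlinarith
    rw [hU, (Stmt16Aux.convexC p q ((k : ℝ) + 1) (k : ℝ)).convexHull_eq]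
end

section
/- Let L = {[p₁,q₁],…,[p_t,q_t]} be a set of closed real intervals with 1 < p_i < q_i for all i ∈ [t], let P_L = ConvexHull(⋃_{i∈[t]} {p_i e_i, q_i e_i}) ⊆ ℝᵗ and φ(L) = max_{i∈[t]} ⌈p_i/(q_i−p_i)⌉. Then ℕᵗ ∖ ⋃_{k∈ℕ} kP_L ⊆ ConvexHull({0} ∪ φ(L)P_L); i.e., every point of ℕᵗ lying outside the convex hull of the origin and the φ(L)-th dilation of P_L belongs to kP_L for some k ∈ ℕ. -/
open Pointwise

/-- `φ(L) = maxᵢ ⌈pᵢ/(qᵢ−pᵢ)⌉`. -/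
noncomputable def phiN {t : ℕ} (p q : Fin t → ℝ) : ℕ :=
  Finset.univ.sup fun i => (⌈p i / (q i - p i)⌉).toNat

lemma mem_PL_of {t : ℕ} (p q : Fin t → ℝ) (hp : ∀ i, 0 < p i) (hq : ∀ i, 0 < q i)
    (y : Fin t → ℝ) (hy : ∀ i, 0 ≤ y i)
    (ha : ∑ i, y i / q i ≤ 1) (hb : 1 ≤ ∑ i, y i / p i) : y ∈ PL p q := by
  set a := ∑ i, y i / q i with hadef
  set b := ∑ i, y i / p i with hbdef
  have hab : a ≤ b := le_trans ha hb
  obtain ⟨c, hc0, hc1, hcs⟩ : ∃ c : ℝ, 0 ≤ c ∧ c ≤ 1 ∧ c * b + (1 - c) * a = 1 := by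
    rcases eq_or_lt_of_le hab with hEq | hLt
    · have ha1 : a = 1 := le_antisymm ha (hEq ▸ hb)
      exact ⟨0, le_refl 0, zero_le_one, by rw [zero_mul, zero_add, sub_zero, one_mul, ha1]⟩
    · refine ⟨(1 - a) / (b - a), div_nonneg (by linarith) (by linarith), ?_, ?_⟩
      · rw [div_le_one (by linarith)]; linarith
      · have hne : b - a ≠ 0 := ne_of_gt (by linarith)
        have h1 : (1 - a) / (b - a) * (b - a) = 1 - a := div_mul_cancel₀ _ hne
        linear_combination h1
  have key : y = ∑ j : Fin t ⊕ Fin t,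
      (Sum.elim (fun i => c * (y i / p i)) (fun i => (1 - c) * (y i / q i)) j) •
      (Sum.elim (fun i => (Pi.single i (p i) : Fin t → ℝ))
        (fun i => (Pi.single i (q i) : Fin t → ℝ)) j) := by
    funext j
    simp only [Fintype.sum_sum_type, Sum.elim_inl, Sum.elim_inr, Finset.sum_apply,
      Pi.add_apply, Pi.smul_apply, smul_eq_mul, Pi.single_apply, mul_ite, mul_zero]
    rw [Finset.sum_ite_eq, Finset.sum_ite_eq]
    simp only [Finset.mem_univ, if_true]
    rw [mul_assoc, mul_assoc, div_mul_cancel₀ _ (hp j).ne', div_mul_cancel₀ _ (hq j).ne']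
    ring
  rw [key, PL]
  apply (convex_convexHull ℝ _).sum_mem
  · rintro (i | i) _
    · exact mul_nonneg hc0 (div_nonneg (hy i) (hp i).le)
    · exact mul_nonneg (by linarith) (div_nonneg (hy i) (hq i).le)
  · rw [Fintype.sum_sum_type]
    simp only [Sum.elim_inl, Sum.elim_inr]
    rw [← Finset.mul_sum, ← Finset.mul_sum]
    exact hcs
  · rintro (i | i) _
    · exact subset_convexHull ℝ _ (Set.mem_iUnion.2 ⟨i, Or.inl rfl⟩)
    · exact subset_convexHull ℝ _ (Set.mem_iUnion.2 ⟨i, Or.inr rfl⟩)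

lemma mem_smul_PL {t : ℕ} (p q : Fin t → ℝ) (hp : ∀ i, 0 < p i) (hq : ∀ i, 0 < q i)
    (y : Fin t → ℝ) (hy : ∀ i, 0 ≤ y i) (s : ℝ) (hs : 0 < s)
    (ha : ∑ i, y i / q i ≤ s) (hb : s ≤ ∑ i, y i / p i) : y ∈ s • PL p q := by
  rw [Set.mem_smul_set_iff_inv_smul_mem₀ hs.ne']
  apply mem_PL_of p q hp hq
  · intro i
    exact mul_nonneg (inv_nonneg.2 hs.le) (hy i)
  · have : ∀ i, (s⁻¹ • y) i / q i = s⁻¹ * (y i / q i) := fun i => by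
      simp [mul_div_assoc]
    simp_rw [this]
    rw [← Finset.mul_sum, inv_mul_eq_div, div_le_one hs]
    exact ha
  · have : ∀ i, (s⁻¹ • y) i / p i = s⁻¹ * (y i / p i) := fun i => by
      simp [mul_div_assoc]
    simp_rw [this]
    rw [← Finset.mul_sum, inv_mul_eq_div, one_le_div hs]
    exact hb

/-- For intervals with `1 < pᵢ < qᵢ`:
`ℕᵗ ∖ ⋃_{k∈ℕ} kP_L ⊆ ConvexHull({0} ∪ φ(L)P_L)`, i.e. every point of `ℕᵗ` not in any
dilation `kP_L` lies in the convex hull of the origin and `φ(L)P_L`. -/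
theorem stmt17 (t : ℕ) (p q : Fin t → ℝ) (h : ∀ i, 1 < p i ∧ p i < q i)
    (x : Fin t → ℕ) (hx : ¬ ∃ k : ℕ, (fun i => (x i : ℝ)) ∈ (k : ℝ) • PL p q) :
    (fun i => (x i : ℝ)) ∈ convexHull ℝ ({0} ∪ (phiN p q : ℝ) • PL p q) := by
  by_cases hx0 : (fun i => (x i : ℝ)) = 0
  · rw [hx0]
    exact subset_convexHull ℝ _ (Set.mem_union_left _ (Set.mem_singleton _))
  · have hp : ∀ i, 0 < p i := fun i => lt_trans one_pos (h i).1
    have hq : ∀ i, 0 < q i := fun i => lt_trans (hp i) (h i).2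
    obtain ⟨i₀, hi₀⟩ : ∃ i, (x i : ℝ) ≠ 0 := by
      by_contra hcon
      push_neg at hcon
      exact hx0 (funext hcon)
    set φ := (phiN p q : ℝ) with hφdef
    have hφi : ∀ i, p i / (q i - p i) ≤ φ := by
      intro i
      have h1 : (⌈p i / (q i - p i)⌉ : ℝ) ≤ ((⌈p i / (q i - p i)⌉.toNat : ℕ) : ℝ) := by
        exact_mod_cast Int.cast_le.mpr (Int.self_le_toNat _)
      have h2 : (⌈p i / (q i - p i)⌉.toNat : ℕ) ≤ phiN p q :=
        Finset.le_sup (f := fun i => (⌈p i / (q i - p i)⌉).toNat) (Finset.mem_univ i)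
      calc p i / (q i - p i) ≤ (⌈p i / (q i - p i)⌉ : ℝ) := Int.le_ceil _
        _ ≤ ((⌈p i / (q i - p i)⌉.toNat : ℕ) : ℝ) := h1
        _ ≤ φ := by rw [hφdef]; exact_mod_cast h2
    have hφ1 : (1:ℝ) ≤ φ := by
      have hpos : 0 < ⌈p i₀ / (q i₀ - p i₀)⌉ :=
        Int.ceil_pos.2 (div_pos (hp i₀) (sub_pos.2 (h i₀).2))
      have h1 : (1:ℕ) ≤ ⌈p i₀ / (q i₀ - p i₀)⌉.toNat := by omega
      have h2 : (⌈p i₀ / (q i₀ - p i₀)⌉.toNat : ℕ) ≤ phiN p q :=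
        Finset.le_sup (f := fun i => (⌈p i / (q i - p i)⌉).toNat) (Finset.mem_univ i₀)
      rw [hφdef]; exact_mod_cast le_trans h1 h2
    have hφ0 : (0:ℝ) < φ := lt_of_lt_of_le one_pos hφ1
    set A := ∑ i, (x i : ℝ) / q i with hAdef
    set B := ∑ i, (x i : ℝ) / p i with hBdef
    have hxnn : ∀ i, (0:ℝ) ≤ (x i : ℝ) := fun i => Nat.cast_nonneg _
    have hA0 : 0 < A :=
      Finset.sum_pos' (fun i _ => div_nonneg (hxnn i) (hq i).le)
        ⟨i₀, Finset.mem_univ i₀, div_pos (lt_of_le_of_ne (hxnn i₀) (Ne.symm hi₀)) (hq i₀)⟩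
    have hAB : A ≤ B := Finset.sum_le_sum fun i _ =>
      div_le_div_of_nonneg_left (hxnn i) (hp i) (h i).2.le
    have hgap : A / φ ≤ B - A := by
      have hterm : ∀ i ∈ Finset.univ,
          (x i : ℝ) / q i / φ ≤ (x i : ℝ) / p i - (x i : ℝ) / q i := by
        intro i _
        have hpd : p i ≤ φ * (q i - p i) := (div_le_iff₀ (sub_pos.2 (h i).2)).1 (hφi i)
        rw [div_div, div_sub_div _ _ (hp i).ne' (hq i).ne',
          div_le_div_iff₀ (mul_pos (hq i) hφ0) (mul_pos (hp i) (hq i))]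
        nlinarith [mul_le_mul_of_nonneg_left hpd (mul_nonneg (hxnn i) (hq i).le),
          mul_nonneg (hxnn i) (hq i).le, hp i, hq i, hφ0]
      calc A / φ = ∑ i, (x i : ℝ) / q i / φ := by rw [Finset.sum_div]
        _ ≤ ∑ i, ((x i : ℝ) / p i - (x i : ℝ) / q i) := Finset.sum_le_sum hterm
        _ = B - A := by rw [Finset.sum_sub_distrib]
    by_cases hAφ : A ≤ φ
    · have hxA : (fun i => (x i : ℝ)) ∈ A • PL p q :=
        mem_smul_PL p q hp hq _ hxnn A hA0 le_rfl hAB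
      obtain ⟨y, hyPL, hxy⟩ := hxA
      have hy' : φ • y ∈ φ • PL p q := Set.smul_mem_smul_set hyPL
      have hxc : (A / φ) • (φ • y) = (fun i => (x i : ℝ)) := by
        rw [smul_smul, div_mul_cancel₀ _ hφ0.ne']
        exact hxy
      have hseg : (fun i => (x i : ℝ)) ∈ segment ℝ (0 : Fin t → ℝ) (φ • y) :=
        ⟨1 - A / φ, A / φ, by
          have : A / φ ≤ 1 := (div_le_one hφ0).2 hAφ
          linarith, div_nonneg hA0.le hφ0.le, by ring, by
          rw [smul_zero, zero_add]; exact hxc⟩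
      exact (convex_convexHull ℝ _).segment_subset
        (subset_convexHull ℝ ({0} ∪ φ • PL p q) (Set.mem_union_left _ (Set.mem_singleton _)))
        (subset_convexHull ℝ ({0} ∪ φ • PL p q) (Set.mem_union_right _ hy')) hseg
    · push_neg at hAφ
      exfalso
      apply hx
      have h1 : (1:ℝ) < A / φ := (one_lt_div hφ0).2 hAφ
      have hB' : A + 1 < B := by linarith
      refine ⟨⌈A⌉₊, ?_⟩
      apply mem_smul_PL p q hp hq _ hxnn _ (lt_of_lt_of_le hA0 (Nat.le_ceil A))
      · exact Nat.le_ceil A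
      · have := Nat.ceil_lt_add_one hA0.le
        linarith
end
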